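/- (Fourier PR condition, single channel) Suppose Φ̃Φᵀ = I_n. Then the perfect reconstruction f = H_d^†(Φ̃(ΦᵀH_d(f)Ψ)Ψ̃ᵀ) holds for all f ∈ ℝⁿ if and only if (1/d)·Σ_{i=1}^q conj(ψ̂_i[ω])·(ψ̃_i)^[ω] = 1 for every discrete frequency ω, where ψ̂ denotes the n-point discrete Fourier transform of the zero-padded filter. -/

import Mathlib

open Matrix BigOperators Finset

noncomputable section

/-- Zero-padding of a length-`d` filter to a signal on `ZMod n`. -/
def zpad {n d : ℕ} [NeZero n] (ψ : Fin d → ℝ) : ZMod n → ℝ :=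
  fun k => if h : (ZMod.val k) < d then ψ ⟨ZMod.val k, h⟩ else 0

/-- Circular convolution of two signals on `ZMod n`. -/
def cconv {n : ℕ} [NeZero n] (f g : ZMod n → ℝ) : ZMod n → ℝ :=
  fun k => ∑ l : ZMod n, f l * g (k - l)

/-- Index flip of a signal on `ZMod n`. -/
def cflip {n : ℕ} (g : ZMod n → ℝ) : ZMod n → ℝ := fun k => g (-k)

/-- Wrap-around Hankel matrix `H_d(f)` of `f : ZMod n → ℝ`. -/
def hankel {n : ℕ} (d : ℕ) (f : ZMod n → ℝ) : Matrix (ZMod n) (Fin d) ℝ :=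
  Matrix.of fun i j => f (i + ((j : ℕ) : ZMod n))

/-- Frobenius (trace) inner product of two matrices. -/
def frobInner {I J : Type*} [Fintype I] [Fintype J] (A B : Matrix I J ℝ) : ℝ :=
  ∑ i, ∑ j, A i j * B i j

/-- Orthonormal Hankel basis element `E_k = (1/√d) H_d(e_k)`. -/
def hankE {n : ℕ} [NeZero n] (d : ℕ) (k : ZMod n) : Matrix (ZMod n) (Fin d) ℝ :=
  (Real.sqrt d)⁻¹ • hankel d (Pi.single k 1)

/-- Generalized (left) inverse of the Hankel lifting. -/
def hdag {n d : ℕ} [NeZero n] (B : Matrix (ZMod n) (Fin d) ℝ) : ZMod n → ℝ :=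
  fun k => (Real.sqrt d)⁻¹ * frobInner (hankE d k) B

/-- `n`-point DFT of a length-`d` filter zero-padded to length `n`. -/
def dftPad (n : ℕ) {d : ℕ} (ψ : Fin d → ℝ) (ω : ZMod n) : ℂ :=
  ∑ k : Fin d, (ψ k : ℂ) *
    Complex.exp (-2 * Real.pi * Complex.I * (k : ℕ) * (ZMod.val ω) / n)

/-- auxiliary: group a double sum over filter taps by the difference of indices mod n. -/
lemma aux_group {n d : ℕ} [NeZero n] {α : Type*} [CommRing α] (F : Fin d → Fin d → α)
    (h : ZMod n → α) :
    ∑ c : Fin d, ∑ b : Fin d, F c b * h (((c : ℕ) : ZMod n) - ((b : ℕ) : ZMod n)) =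
      ∑ t : ZMod n, (∑ c : Fin d, ∑ b : Fin d,
        if ((c : ℕ) : ZMod n) - ((b : ℕ) : ZMod n) = t then F c b else 0) * h t := by
  symm
  simp only [Finset.sum_mul, ite_mul, zero_mul]
  rw [Finset.sum_comm]
  refine Finset.sum_congr rfl fun c _ => ?_
  rw [Finset.sum_comm]
  refine Finset.sum_congr rfl fun b _ => ?_
  simp [Finset.sum_ite_eq]

/-- Fourier PR condition, single channel: given `Φ̃Φᵀ = I_n`,
perfect reconstruction `f = H_d^†(Φ̃(ΦᵀH_d(f)Ψ)Ψ̃ᵀ)` holds for all `f` iff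
`(1/d) Σ_i conj(ψ̂_i[ω]) ψ̃̂_i[ω] = 1` for every discrete frequency `ω`. -/
theorem fourier_PR_condition {n d q m : ℕ} [NeZero n] (hd : 0 < d)
    (Phi Phit : Matrix (ZMod n) (Fin m) ℝ) (hPhi : Phit * Phiᵀ = 1)
    (Psi Psit : Matrix (Fin d) (Fin q) ℝ) :
    (∀ f : ZMod n → ℝ, f = hdag (Phit * (Phiᵀ * hankel d f * Psi) * Psitᵀ)) ↔
    (∀ ω : ZMod n,
      (d : ℂ)⁻¹ * ∑ i : Fin q,
        (starRingEnd ℂ) (dftPad n (fun l => Psi l i) ω) *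
          dftPad n (fun l => Psit l i) ω = 1) := by
  have hdR : (d : ℝ) ≠ 0 := Nat.cast_ne_zero.mpr hd.ne'
  have hdC : (d : ℂ) ≠ 0 := Nat.cast_ne_zero.mpr hd.ne'
  set M : Matrix (Fin d) (Fin d) ℝ := Psi * Psitᵀ with hMdef
  -- the autocorrelation-type coefficient function
  let g : ZMod n → ℝ := fun t => ∑ c : Fin d, ∑ b : Fin d,
    if ((c : ℕ) : ZMod n) - ((b : ℕ) : ZMod n) = t then M c b else 0
  -- Step 1: matrix simplification using Φ̃Φᵀ = 1
  have hmat : ∀ f : ZMod n → ℝ,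
      Phit * (Phiᵀ * hankel d f * Psi) * Psitᵀ = hankel d f * M := by
    intro f
    calc Phit * (Phiᵀ * hankel d f * Psi) * Psitᵀ
        = ((Phit * Phiᵀ) * hankel d f) * (Psi * Psitᵀ) := by
          simp only [Matrix.mul_assoc]
      _ = hankel d f * M := by rw [hPhi, Matrix.one_mul, hMdef]
  -- Step 2: explicit formula for hdag
  have hdag_eq : ∀ (B : Matrix (ZMod n) (Fin d) ℝ) (k : ZMod n),
      hdag B k = (d : ℝ)⁻¹ * ∑ b : Fin d, B (k - ((b : ℕ) : ZMod n)) b := by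
    intro B k
    have h1 : ∀ b : Fin d,
        ∑ a : ZMod n, (Pi.single k 1 : ZMod n → ℝ) (a + ((b : ℕ) : ZMod n)) * B a b
          = B (k - ((b : ℕ) : ZMod n)) b := by
      intro b
      rw [Finset.sum_eq_single (k - ((b : ℕ) : ZMod n))]
      · have : (k - ((b : ℕ) : ZMod n)) + ((b : ℕ) : ZMod n) = k := by ring
        simp [this, Pi.single_apply]
      · intro a _ ha
        have h2 : a + ((b : ℕ) : ZMod n) ≠ k := by
          intro h; apply ha; rw [← h]; ring
        simp [Pi.single_apply, h2]
      · simp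
    have hsq : (Real.sqrt d)⁻¹ * (Real.sqrt d)⁻¹ = (d : ℝ)⁻¹ := by
      rw [← mul_inv]
      rw [Real.mul_self_sqrt (by positivity)]
    calc hdag B k
        = (Real.sqrt d)⁻¹ * ∑ a : ZMod n, ∑ b : Fin d,
            ((Real.sqrt d)⁻¹ * (Pi.single k 1 : ZMod n → ℝ) (a + ((b : ℕ) : ZMod n))) * B a b := rfl
      _ = ((Real.sqrt d)⁻¹ * (Real.sqrt d)⁻¹) * ∑ a : ZMod n, ∑ b : Fin d,
            (Pi.single k 1 : ZMod n → ℝ) (a + ((b : ℕ) : ZMod n)) * B a b := by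
          rw [mul_assoc]
          congr 1
          rw [Finset.mul_sum]
          refine Finset.sum_congr rfl fun a _ => ?_
          rw [Finset.mul_sum]
          refine Finset.sum_congr rfl fun b _ => ?_
          ring
      _ = (d : ℝ)⁻¹ * ∑ b : Fin d, B (k - ((b : ℕ) : ZMod n)) b := by
          rw [hsq, Finset.sum_comm]
          congr 1
          exact Finset.sum_congr rfl fun b _ => h1 b
  -- Step 3: the PR map in convolution form
  have hPR : ∀ (f : ZMod n → ℝ) (k : ZMod n),
      hdag (Phit * (Phiᵀ * hankel d f * Psi) * Psitᵀ) k
        = (d : ℝ)⁻¹ * ∑ c : Fin d, ∑ b : Fin d,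
            M c b * f (k + (((c : ℕ) : ZMod n) - ((b : ℕ) : ZMod n))) := by
    intro f k
    rw [hmat, hdag_eq]
    congr 1
    simp only [Matrix.mul_apply, hankel, Matrix.of_apply]
    rw [Finset.sum_comm]
    refine Finset.sum_congr rfl fun c _ => Finset.sum_congr rfl fun b _ => ?_
    rw [mul_comm]
    congr 1
    ring_nf
  -- Step 4: LHS ↔ g = d δ₀
  have hL : (∀ f : ZMod n → ℝ, f = hdag (Phit * (Phiᵀ * hankel d f * Psi) * Psitᵀ)) ↔
      (∀ t : ZMod n, g t = if t = 0 then (d : ℝ) else 0) := by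
    constructor
    · intro h t
      have h0 := congrFun (h (fun x => if x = t then (1 : ℝ) else 0)) 0
      rw [hPR] at h0
      simp only [zero_add, mul_ite, mul_one, mul_zero] at h0
      by_cases ht : t = 0
      · subst ht
        simp only [if_pos rfl] at h0
        field_simp at h0
        simpa [g] using h0.symm
      · rw [if_neg ht]
        rw [if_neg (by exact fun h' => ht h'.symm)] at h0
        have : (d : ℝ)⁻¹ * g t = 0 := h0.symm
        have := mul_eq_zero.mp this
        rcases this with h' | h'
        · exact absurd h' (inv_ne_zero hdR)
        · exact h'
    · intro hgt f
      funext k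
      rw [hPR]
      have : (∑ c : Fin d, ∑ b : Fin d,
          M c b * f (k + (((c : ℕ) : ZMod n) - ((b : ℕ) : ZMod n))))
            = ∑ t : ZMod n, g t * f (k + t) := by
        exact aux_group M (fun t => f (k + t))
      rw [this]
      have : ∑ t : ZMod n, g t * f (k + t) = (d : ℝ) * f k := by
        rw [Finset.sum_congr rfl (fun t _ => by rw [hgt t])]
        simp [ite_mul, zero_mul, Finset.sum_ite_eq']
      rw [this]
      field_simp
  -- Step 5: character identity for the Fourier side
  have hconj : ∀ (ψ : Fin d → ℝ) (ω : ZMod n), (starRingEnd ℂ) (dftPad n ψ ω)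
      = ∑ k : Fin d, (ψ k : ℂ) *
          Complex.exp (2 * Real.pi * Complex.I * (k : ℕ) * (ZMod.val ω) / n) := by
    intro ψ ω
    unfold dftPad
    rw [map_sum]
    refine Finset.sum_congr rfl fun k _ => ?_
    rw [_root_.map_mul, Complex.conj_ofReal, ← Complex.exp_conj]
    have hz : (starRingEnd ℂ) (-2 * (Real.pi : ℂ) * Complex.I * ((k : ℕ) : ℂ) *
        ((ZMod.val ω : ℕ) : ℂ) / (n : ℂ))
        = 2 * (Real.pi : ℂ) * Complex.I * ((k : ℕ) : ℂ) * ((ZMod.val ω : ℕ) : ℂ) / (n : ℂ) := by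
      have hz0 : (-2 : ℂ) * (Real.pi : ℂ) * Complex.I * ((k : ℕ) : ℂ) *
          ((ZMod.val ω : ℕ) : ℂ) / (n : ℂ)
          = (((-2 * Real.pi * (ZMod.val ω : ℕ) * ((k : ℕ) : ℝ) / n : ℝ)) : ℂ) * Complex.I := by
        push_cast; ring
      rw [hz0, _root_.map_mul, Complex.conj_ofReal, Complex.conj_I]
      push_cast; ring
    rw [hz]
  have hchar : ∀ (c b : Fin d) (ω : ZMod n),
      Complex.exp (2 * Real.pi * Complex.I * (c : ℕ) * (ZMod.val ω) / n) *
        Complex.exp (-2 * Real.pi * Complex.I * (b : ℕ) * (ZMod.val ω) / n)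
        = ZMod.stdAddChar ((((c : ℕ) : ZMod n) - ((b : ℕ) : ZMod n)) * ω) := by
    intro c b ω
    rw [← Complex.exp_add]
    have e1 : (2 : ℂ) * Real.pi * Complex.I * (c : ℕ) * (ZMod.val ω) / n +
        -2 * Real.pi * Complex.I * (b : ℕ) * (ZMod.val ω) / n
        = 2 * Real.pi * Complex.I *
            ((((((c : ℕ) : ℤ) - ((b : ℕ) : ℤ)) * (ZMod.val ω : ℤ)) : ℤ) : ℂ) / n := by
      push_cast
      ring
    rw [e1, ← ZMod.stdAddChar_coe]
    congr 1
    push_cast [ZMod.natCast_zmod_val]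
    ring
  have key : ∀ ω : ZMod n,
      (∑ i : Fin q, (starRingEnd ℂ) (dftPad n (fun l => Psi l i) ω) *
          dftPad n (fun l => Psit l i) ω)
        = ∑ t : ZMod n, ((g t : ℝ) : ℂ) * ZMod.stdAddChar (t * ω) := by
    intro ω
    have h1 : ∀ i : Fin q, (starRingEnd ℂ) (dftPad n (fun l => Psi l i) ω) *
        dftPad n (fun l => Psit l i) ω
        = ∑ c : Fin d, ∑ b : Fin d, ((Psi c i : ℝ) : ℂ) * ((Psit b i : ℝ) : ℂ) *
            ZMod.stdAddChar ((((c : ℕ) : ZMod n) - ((b : ℕ) : ZMod n)) * ω) := by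
      intro i
      rw [hconj]
      unfold dftPad
      rw [Finset.sum_mul_sum]
      refine Finset.sum_congr rfl fun c _ => Finset.sum_congr rfl fun b _ => ?_
      rw [mul_mul_mul_comm, hchar c b ω]
    calc (∑ i : Fin q, (starRingEnd ℂ) (dftPad n (fun l => Psi l i) ω) *
          dftPad n (fun l => Psit l i) ω)
        = ∑ i : Fin q, ∑ c : Fin d, ∑ b : Fin d,
            ((Psi c i : ℝ) : ℂ) * ((Psit b i : ℝ) : ℂ) *
              ZMod.stdAddChar ((((c : ℕ) : ZMod n) - ((b : ℕ) : ZMod n)) * ω) :=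
          Finset.sum_congr rfl fun i _ => h1 i
      _ = ∑ c : Fin d, ∑ b : Fin d, ((M c b : ℝ) : ℂ) *
            ZMod.stdAddChar ((((c : ℕ) : ZMod n) - ((b : ℕ) : ZMod n)) * ω) := by
          rw [Finset.sum_comm]
          refine Finset.sum_congr rfl fun c _ => ?_
          rw [Finset.sum_comm]
          refine Finset.sum_congr rfl fun b _ => ?_
          rw [← Finset.sum_mul]
          congr 1
          rw [hMdef]
          rw [Matrix.mul_apply]
          push_cast
          exact Finset.sum_congr rfl fun i _ => by rw [Matrix.transpose_apply]
      _ = ∑ t : ZMod n, ((g t : ℝ) : ℂ) * ZMod.stdAddChar (t * ω) := by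
          rw [aux_group (fun c b => ((M c b : ℝ) : ℂ))
            (fun t => (ZMod.stdAddChar (t * ω) : ℂ))]
          refine Finset.sum_congr rfl fun t _ => ?_
          congr 1
          simp only [g]
          push_cast [apply_ite (fun (x : ℝ) => (x : ℂ))]
          rfl
  -- Step 6: dft relation
  have hGdft : ∀ ω : ZMod n,
      ∑ t : ZMod n, ((g t : ℝ) : ℂ) * ZMod.stdAddChar (t * ω)
        = ZMod.dft (fun t => ((g t : ℝ) : ℂ)) (-ω) := by
    intro ω
    rw [ZMod.dft_apply]
    refine Finset.sum_congr rfl fun t _ => ?_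
    rw [smul_eq_mul, mul_neg, neg_neg, mul_comm]
  have hDdft : ∀ k : ZMod n,
      ZMod.dft (fun t : ZMod n => if t = 0 then (d : ℂ) else 0) k = (d : ℂ) := by
    intro k
    rw [ZMod.dft_apply]
    simp [smul_eq_mul, mul_ite, mul_zero, Finset.sum_ite_eq']
  -- Step 7: RHS ↔ g = d δ₀
  have hR : (∀ ω : ZMod n,
      (d : ℂ)⁻¹ * ∑ i : Fin q,
        (starRingEnd ℂ) (dftPad n (fun l => Psi l i) ω) *
          dftPad n (fun l => Psit l i) ω = 1) ↔
      (∀ t : ZMod n, g t = if t = 0 then (d : ℝ) else 0) := by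
    constructor
    · intro h t
      have hG : ZMod.dft (fun t => ((g t : ℝ) : ℂ))
          = ZMod.dft (fun t : ZMod n => if t = 0 then (d : ℂ) else 0) := by
        funext k
        rw [hDdft]
        have h2 := h (-k)
        rw [key, hGdft, neg_neg] at h2
        field_simp at h2
        exact h2
      have hGD := ZMod.dft.injective hG
      have h3 := congrFun hGD t
      by_cases ht : t = 0
      · subst ht
        rw [if_pos rfl] at h3 ⊢
        exact_mod_cast h3
      · rw [if_neg ht] at h3 ⊢
        exact_mod_cast h3
    · intro hgt ω
      have hfun : (fun t => ((g t : ℝ) : ℂ))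
          = (fun t : ZMod n => if t = 0 then (d : ℂ) else 0) := by
        funext t
        rw [hgt t]
        push_cast [apply_ite (fun (x : ℝ) => (x : ℂ))]
        rfl
      rw [key, hGdft, hfun, hDdft]
      exact inv_mul_cancel₀ hdC
  exact hL.trans hR.symm
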